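/- Let p ≥ 1, let v, v' ∈ ℝ^p with ‖v − v'‖₂ ≤ Δ for some Δ > 0, and let δ ∈ (0,1), ε ∈ (0,1), and c > 0 with c² > 2·ln(1.25/δ). Set σ = c·Δ/ε. Let μ be the law of v + Z and ν the law of v' + Z, where Z is a random vector in ℝ^p with p independent coordinates each distributed N(0, σ²) (i.e., μ and ν are the p-fold product of one-dimensional Gaussians N(0,σ²) translated by v and v' respectively). Then μ and ν are (ε, δ)-indistinguishable: for every measurable set S ⊆ ℝ^p, μ(S) ≤ e^ε·ν(S) + δ. (This is the (ε,δ)-differential privacy guarantee of the Gaussian mechanism M(D) = f(D) + N(0, σ²I) for a function f of ℓ₂-sensitivity Δ, stated for an arbitrary pair of neighboring inputs.) -/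

import Mathlib

open MeasureTheory ProbabilityTheory Real
open scoped ENNReal NNReal


-- numeric helpers
lemma exp_le_inv_one_sub {x : ℝ} (hx : x < 1) : Real.exp x ≤ 1/(1-x) := by
  have h := Real.add_one_le_exp (-x)
  rw [Real.exp_neg] at h
  have hpos := Real.exp_pos x
  have h1 : 0 < 1 - x := by linarith
  rw [le_div_iff₀ h1]
  have h2 := mul_inv_cancel₀ (ne_of_gt hpos)
  nlinarith

lemma exp_neg_le_inv_one_add {y : ℝ} (hy : 0 ≤ y) : Real.exp (-y) ≤ 1/(1+y) := by
  have h := Real.add_one_le_exp y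
  have hpos := Real.exp_pos y
  rw [Real.exp_neg, le_div_iff₀ (by linarith)]
  have h2 := mul_inv_cancel₀ (ne_of_gt hpos)
  nlinarith

lemma exp_half_le : Real.exp (1/2 : ℝ) ≤ 2.5 := by
  have h : Real.exp (1/2 : ℝ) * Real.exp (1/2 : ℝ) = Real.exp 1 := by
    rw [← Real.exp_add]; norm_num
  have h1 := Real.exp_one_lt_d9
  have h2 := Real.exp_pos (1/2 : ℝ)
  nlinarith

lemma log_125_lb : (0.22 : ℝ) < Real.log 1.25 := by
  rw [Real.lt_log_iff_exp_lt (by norm_num : (0:ℝ) < 1.25)]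
  have e01 : Real.exp 0.1 ≤ 1/0.9 := by
    have := exp_le_inv_one_sub (x := 0.1) (by norm_num)
    norm_num at this ⊢
    linarith
  have e11 : Real.exp 1.1 < 3.021 := by
    have : Real.exp (1.1 : ℝ) = Real.exp 1 * Real.exp 0.1 := by
      rw [← Real.exp_add]; norm_num
    have h1 := Real.exp_one_lt_d9
    have h2 := Real.exp_pos (0.1 : ℝ)
    rw [this]
    nlinarith
  by_contra hcon
  push_neg at hcon
  have h5 : (1.25 : ℝ)^5 ≤ (Real.exp 0.22)^5 :=
    pow_le_pow_left₀ (by norm_num) hcon 5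
  have : (Real.exp 0.22)^5 = Real.exp 1.1 := by
    rw [← Real.exp_nat_mul]; norm_num
  rw [this] at h5
  norm_num at h5
  linarith


lemma lintegral_pi_prod : ∀ (n : ℕ) (μ : Fin n → Measure ℝ), (∀ i, IsProbabilityMeasure (μ i)) →
    ∀ (f : Fin n → ℝ → ℝ≥0∞), (∀ i, Measurable (f i)) →
    ∫⁻ x, ∏ i, f i (x i) ∂Measure.pi μ = ∏ i, ∫⁻ t, f i t ∂(μ i) := by
  intro n
  induction n with
  | zero =>
    intro μ _ f _
    simp [Measure.pi_of_empty]
  | succ n ih =>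
    intro μ hμ f hf
    have := hμ
    have hmp := measurePreserving_piFinSuccAbove μ 0
    have hg : Measurable (fun y : ℝ × (Fin n → ℝ) => f 0 y.1 * ∏ j, f ((0:Fin (n+1)).succAbove j) (y.2 j)) := by
      apply Measurable.mul
      · exact (hf 0).comp measurable_fst
      · exact (Finset.measurable_prod _ fun j _ =>
          (hf _).comp ((measurable_pi_apply j).comp measurable_snd))
    calc ∫⁻ x, ∏ i, f i (x i) ∂Measure.pi μ
        = ∫⁻ x, (fun y : ℝ × (Fin n → ℝ) => f 0 y.1 * ∏ j, f ((0:Fin (n+1)).succAbove j) (y.2 j))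
            (MeasurableEquiv.piFinSuccAbove (fun _ => ℝ) 0 x) ∂Measure.pi μ := by
          apply lintegral_congr
          intro x
          simp only [MeasurableEquiv.piFinSuccAbove_apply]
          rw [Fin.prod_univ_succ]
          congr 1
      _ = ∫⁻ y, f 0 y.1 * ∏ j, f ((0:Fin (n+1)).succAbove j) (y.2 j)
            ∂((μ 0).prod (Measure.pi fun j => μ ((0:Fin (n+1)).succAbove j))) :=
          hmp.lintegral_comp hg
      _ = (∫⁻ t, f 0 t ∂μ 0) * ∫⁻ z, ∏ j, f ((0:Fin (n+1)).succAbove j) (z j)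
            ∂(Measure.pi fun j => μ ((0:Fin (n+1)).succAbove j)) :=
          lintegral_prod_mul ((hf 0).aemeasurable)
            ((Finset.measurable_prod _ fun j _ => (hf _).comp (measurable_pi_apply j)).aemeasurable)
      _ = ∏ i, ∫⁻ t, f i t ∂(μ i) := by
          rw [ih _ (fun j => hμ _) _ (fun j => hf _), Fin.prod_univ_succ]
          simp [Fin.zero_succAbove]


lemma gauss1d_density (a b : ℝ) {s2 : ℝ} (hs2 : 0 < s2) :
    gaussianReal a s2.toNNReal = (gaussianReal b s2.toNNReal).withDensity
      (fun t => ENNReal.ofReal (Real.exp (((t - b)^2 - (t - a)^2) / (2*s2)))) := by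
  have hne : s2.toNNReal ≠ 0 := by
    simp only [ne_eq, Real.toNNReal_eq_zero, not_le]
    exact hs2
  have hcoe : ((s2.toNNReal : ℝ≥0) : ℝ) = s2 := Real.coe_toNNReal s2 hs2.le
  have hmeas : Measurable (fun t : ℝ => ENNReal.ofReal (Real.exp (((t - b)^2 - (t - a)^2) / (2*s2)))) := by
    apply Measurable.ennreal_ofReal
    exact (((measurable_id.sub_const b).pow_const 2).sub ((measurable_id.sub_const a).pow_const 2)).div_const _ |>.exp
  rw [gaussianReal_of_var_ne_zero a hne, gaussianReal_of_var_ne_zero b hne,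
    ← withDensity_mul _ (measurable_gaussianPDF b _) hmeas]
  congr 1
  funext t
  simp only [Pi.mul_apply, gaussianPDF]
  rw [← ENNReal.ofReal_mul (gaussianPDFReal_nonneg b _ t)]
  congr 1
  simp only [gaussianPDFReal, hcoe]
  conv_rhs => rw [mul_assoc, ← Real.exp_add, ← add_div]
  congr 2
  ring


lemma pi_gauss_density (p : ℕ) (a b : Fin p → ℝ) {s2 : ℝ} (hs2 : 0 < s2) :
    Measure.pi (fun i => gaussianReal (a i) s2.toNNReal) =
      (Measure.pi fun i => gaussianReal (b i) s2.toNNReal).withDensity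
        (fun x => ENNReal.ofReal (Real.exp (∑ i, ((x i - b i)^2 - (x i - a i)^2) / (2*s2)))) := by
  set g : Fin p → ℝ → ℝ≥0∞ :=
    fun i t => ENNReal.ofReal (Real.exp (((t - b i)^2 - (t - a i)^2) / (2*s2))) with hgdef
  have hgm : ∀ i, Measurable (g i) := fun i => Measurable.ennreal_ofReal
    ((((measurable_id.sub_const (b i)).pow_const 2).sub
      ((measurable_id.sub_const (a i)).pow_const 2)).div_const _).exp
  have hprod : (fun x : Fin p → ℝ =>
      ENNReal.ofReal (Real.exp (∑ i, ((x i - b i)^2 - (x i - a i)^2) / (2*s2))))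
      = fun x => ∏ i, g i (x i) := by
    funext x
    rw [Real.exp_sum, ← ENNReal.ofReal_prod_of_nonneg (fun i _ => (Real.exp_pos _).le)]
  rw [hprod]
  refine (Measure.pi_eq (μ := fun i => gaussianReal (a i) s2.toNNReal) fun s hs => ?_)
  rw [withDensity_apply _ (MeasurableSet.univ_pi hs)]
  have hkey : ∫⁻ x in Set.pi Set.univ s, ∏ i, g i (x i)
        ∂(Measure.pi fun i => gaussianReal (b i) s2.toNNReal)
      = ∫⁻ x, ∏ i, (s i).indicator (g i) (x i)
        ∂(Measure.pi fun i => gaussianReal (b i) s2.toNNReal) := by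
    rw [← lintegral_indicator (MeasurableSet.univ_pi hs)]
    congr 1; funext x
    by_cases hx : x ∈ Set.pi Set.univ s
    · rw [Set.indicator_of_mem hx]
      exact Finset.prod_congr rfl fun i _ => (Set.indicator_of_mem (hx i (Set.mem_univ i)) _).symm
    · rw [Set.indicator_of_notMem hx]
      rw [Set.mem_univ_pi] at hx; push_neg at hx
      obtain ⟨i, hi⟩ := hx
      exact (Finset.prod_eq_zero (Finset.mem_univ i) (Set.indicator_of_notMem hi _)).symm
  rw [hkey, lintegral_pi_prod p _ (fun i => inferInstance) _
    (fun i => (hgm i).indicator (hs i))]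
  refine Finset.prod_congr rfl fun i _ => ?_
  rw [lintegral_indicator (hs i), ← withDensity_apply _ (hs i), ← gauss1d_density (a i) (b i) hs2]


lemma gauss1d_reflect (a : ℝ) (V : ℝ≥0) :
    (gaussianReal a V).map (fun t => 2*a - t) = gaussianReal a V := by
  have h1 : (fun t : ℝ => 2*a - t) = (fun t : ℝ => 2*a + t) ∘ (fun t : ℝ => (-1) * t) := by
    funext t; simp [sub_eq_add_neg]
  rw [h1, ← Measure.map_map (by fun_prop) (by fun_prop)]
  rw [gaussianReal_map_const_mul (-1)]
  rw [gaussianReal_map_const_add (2*a)]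
  congr 1
  · ring
  · ext
    simp


lemma pi_gauss_reflect (p : ℕ) (a : Fin p → ℝ) (V : ℝ≥0) :
    MeasurePreserving (fun (x : Fin p → ℝ) i => 2 * a i - x i)
      (Measure.pi fun i => gaussianReal (a i) V) (Measure.pi fun i => gaussianReal (a i) V) :=
  measurePreserving_pi _ _ (fun i => ⟨by fun_prop, gauss1d_reflect (a i) V⟩)

lemma gauss_halfspace (p : ℕ) (a : Fin p → ℝ) (V : ℝ≥0) (L : (Fin p → ℝ) → ℝ)
    (hL : Measurable L) (θ : ℝ) (hrefl : ∀ x, L (fun i => 2 * a i - x i) = 2*θ - L x) :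
    (Measure.pi fun i => gaussianReal (a i) V) {x | θ < L x} ≤ 2⁻¹ := by
  set μa := (Measure.pi fun i => gaussianReal (a i) V) with hμa
  have hmp := pi_gauss_reflect p a V
  have hs : MeasurableSet {x : Fin p → ℝ | θ < L x} := measurableSet_lt measurable_const hL
  have h1 : μa {x | θ < L x} = μa {x | L x < θ} := by
    have hpre := hmp.measure_preimage hs.nullMeasurableSet
    have : (fun (x : Fin p → ℝ) i => 2 * a i - x i) ⁻¹' {x | θ < L x} = {x | L x < θ} := by
      ext x
      simp only [Set.mem_preimage, Set.mem_setOf_eq, hrefl x]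
      constructor <;> intro h <;> linarith
    rw [this] at hpre
    exact hpre.symm
  have hdisj : Disjoint {x : Fin p → ℝ | θ < L x} {x | L x < θ} := by
    rw [Set.disjoint_left]
    intro x h1' h2'
    simp only [Set.mem_setOf_eq] at h1' h2'
    linarith
  have h2 : μa {x | θ < L x} + μa {x | L x < θ} ≤ 1 := by
    rw [← measure_union hdisj (measurableSet_lt hL measurable_const)]
    exact (measure_mono (Set.subset_univ _)).trans_eq (measure_univ)
  rw [← h1] at h2
  rw [← two_mul] at h2
  rw [← one_div, ENNReal.le_div_iff_mul_le (Or.inl two_ne_zero) (Or.inl (by simp)), mul_comm]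
  exact h2

lemma gauss_core_bound (p : ℕ) (vv vv' : Fin p → ℝ) {s2 : ℝ} (hs2 : 0 < s2)
    (E : Set (Fin p → ℝ)) (hE : MeasurableSet E) (θ t K : ℝ)
    (hmean : (1 + 2*t) * ((∑ i, (vv i - vv' i)^2) / (2*s2)) = θ)
    (hK : ∀ x ∈ E, -t * (∑ i, ((x i - vv' i)^2 - (x i - vv i)^2)/(2*s2))
          + (t + t^2) * ((∑ i, (vv i - vv' i)^2)/(2*s2)) ≤ K)
    (hEsub : E ⊆ {x | θ < ∑ i, ((x i - vv' i)^2 - (x i - vv i)^2)/(2*s2)}) :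
    (Measure.pi fun i => gaussianReal (vv i) s2.toNNReal) E
      ≤ 2⁻¹ * ENNReal.ofReal (Real.exp K) := by
  set L : (Fin p → ℝ) → ℝ := fun x => ∑ i, ((x i - vv' i)^2 - (x i - vv i)^2)/(2*s2) with hLdef
  have hLm : Measurable L := by
    simp only [hLdef]
    fun_prop
  set a : Fin p → ℝ := fun i => vv i + t * (vv i - vv' i) with hadef
  have hs2' : (2*s2) ≠ 0 := by positivity
  -- key exponent identity
  have hexp : ∀ x : Fin p → ℝ, ∑ i, ((x i - a i)^2 - (x i - vv i)^2)/(2*s2)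
      = -t * L x + (t + t^2) * ((∑ i, (vv i - vv' i)^2)/(2*s2)) := by
    intro x
    have hper : ∀ i : Fin p, ((x i - a i)^2 - (x i - vv i)^2)/(2*s2)
        = -t * (((x i - vv' i)^2 - (x i - vv i)^2)/(2*s2))
          + (t + t^2) * ((vv i - vv' i)^2/(2*s2)) := by
      intro i
      simp only [hadef]
      field_simp
      ring
    rw [Finset.sum_congr rfl (fun i _ => hper i), Finset.sum_add_distrib,
      ← Finset.mul_sum, ← Finset.mul_sum, ← Finset.sum_div, ← Finset.sum_div]
    simp only [hLdef, Finset.sum_div]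
  -- L a = θ
  have hLa : L a = θ := by
    have hper : ∀ i : Fin p, ((a i - vv' i)^2 - (a i - vv i)^2)/(2*s2)
        = (1 + 2*t) * ((vv i - vv' i)^2/(2*s2)) := by
      intro i
      simp only [hadef]
      field_simp
      ring
    simp only [hLdef]
    rw [Finset.sum_congr rfl (fun i _ => hper i), ← Finset.mul_sum, ← Finset.sum_div]
    exact hmean
  -- reflection property of L about a
  have hrefl : ∀ x, L (fun i => 2 * a i - x i) = 2*θ - L x := by
    intro x
    have hper : ∀ i : Fin p, (((2 * a i - x i) - vv' i)^2 - ((2 * a i - x i) - vv i)^2)/(2*s2)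
        = 2 * (((a i - vv' i)^2 - (a i - vv i)^2)/(2*s2))
          - ((x i - vv' i)^2 - (x i - vv i)^2)/(2*s2) := by
      intro i
      field_simp
      ring
    simp only [hLdef]
    rw [Finset.sum_congr rfl (fun i _ => hper i), Finset.sum_sub_distrib, ← Finset.mul_sum]
    rw [← hLa]
  have hhalf : (Measure.pi fun i => gaussianReal (a i) s2.toNNReal) {x | θ < L x} ≤ 2⁻¹ :=
    gauss_halfspace p a _ L hLm θ hrefl
  -- density bound
  rw [pi_gauss_density p vv a hs2, withDensity_apply _ hE]
  calc ∫⁻ x in E, ENNReal.ofReal (Real.exp (∑ i, ((x i - a i)^2 - (x i - vv i)^2) / (2*s2)))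
        ∂(Measure.pi fun i => gaussianReal (a i) s2.toNNReal)
      ≤ ∫⁻ _x in E, ENNReal.ofReal (Real.exp K)
        ∂(Measure.pi fun i => gaussianReal (a i) s2.toNNReal) := by
        apply setLIntegral_mono' hE
        intro x hx
        apply ENNReal.ofReal_le_ofReal
        apply Real.exp_le_exp.mpr
        rw [hexp x]
        exact hK x hx
    _ = ENNReal.ofReal (Real.exp K)
        * (Measure.pi fun i => gaussianReal (a i) s2.toNNReal) E := setLIntegral_const E _
    _ ≤ ENNReal.ofReal (Real.exp K) * 2⁻¹ := by
        apply mul_le_mul_right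
        exact le_trans (measure_mono hEsub) hhalf
    _ = 2⁻¹ * ENNReal.ofReal (Real.exp K) := mul_comm _ _


lemma half_ofReal_le {r d : ℝ} (h : r ≤ 2*d) :
    (2⁻¹ : ℝ≥0∞) * ENNReal.ofReal r ≤ ENNReal.ofReal d := by
  calc (2⁻¹ : ℝ≥0∞) * ENNReal.ofReal r ≤ (2⁻¹ : ℝ≥0∞) * ENNReal.ofReal (2*d) :=
        mul_le_mul_right (ENNReal.ofReal_le_ofReal h) _
    _ = (2⁻¹ : ℝ≥0∞) * (2 * ENNReal.ofReal d) := by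
        rw [ENNReal.ofReal_mul (by norm_num)]
        norm_num
    _ = ENNReal.ofReal d := by
        rw [← mul_assoc, ENNReal.inv_mul_cancel (by norm_num) (by norm_num), one_mul]

set_option maxHeartbeats 2000000 in
theorem gaussian_mechanism_dp
    (p : ℕ) (hp : 1 ≤ p) (v v' : Fin p → ℝ) (Δ : ℝ) (hΔ : 0 < Δ)
    (hsens : Real.sqrt (∑ i, (v i - v' i) ^ 2) ≤ Δ)
    (δ ε c : ℝ) (hδ : δ ∈ Set.Ioo (0 : ℝ) 1) (hε : ε ∈ Set.Ioo (0 : ℝ) 1)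
    (hc : 0 < c) (hc2 : 2 * Real.log (1.25 / δ) < c ^ 2)
    (σ : ℝ) (hσ : σ = c * Δ / ε) :
    ∀ S : Set (Fin p → ℝ), MeasurableSet S →
      (Measure.pi fun i => gaussianReal (v i) ((σ ^ 2).toNNReal)) S ≤
        ENNReal.ofReal (Real.exp ε) *
            (Measure.pi fun i => gaussianReal (v' i) ((σ ^ 2).toNNReal)) S
          + ENNReal.ofReal δ := by
  obtain ⟨hδ0, hδ1⟩ := hδ
  obtain ⟨hε0, hε1⟩ := hε
  intro S hS
  have hσpos : 0 < σ := by rw [hσ]; positivity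
  have hs2 : 0 < σ^2 := by positivity
  obtain ⟨L, hLeq⟩ : ∃ L : (Fin p → ℝ) → ℝ,
      L = fun x => ∑ i, ((x i - v' i)^2 - (x i - v i)^2)/(2*σ^2) := ⟨_, rfl⟩
  obtain ⟨m, hmeq⟩ : ∃ m : ℝ, m = (∑ i, (v i - v' i)^2)/(2*σ^2) := ⟨_, rfl⟩
  have hLm : Measurable L := by rw [hLeq]; fun_prop
  set T : Set (Fin p → ℝ) := {x | ε < L x} with hTdef
  have hT : MeasurableSet T := measurableSet_lt measurable_const hLm
  set μ := Measure.pi fun i => gaussianReal (v i) ((σ^2).toNNReal) with hμdef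
  set ν := Measure.pi fun i => gaussianReal (v' i) ((σ^2).toNNReal) with hνdef
  -- Part 1 : on the complement of T the density is at most e^ε
  have part1 : μ (S ∩ Tᶜ) ≤ ENNReal.ofReal (Real.exp ε) * ν S := by
    rw [hμdef, pi_gauss_density p v v' hs2, withDensity_apply _ (hS.inter hT.compl)]
    calc ∫⁻ x in S ∩ Tᶜ, ENNReal.ofReal (Real.exp (∑ i, ((x i - v' i)^2 - (x i - v i)^2)/(2*σ^2)))
          ∂(Measure.pi fun i => gaussianReal (v' i) ((σ^2).toNNReal))
        ≤ ∫⁻ _x in S ∩ Tᶜ, ENNReal.ofReal (Real.exp ε)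
          ∂(Measure.pi fun i => gaussianReal (v' i) ((σ^2).toNNReal)) := by
          apply setLIntegral_mono' (hS.inter hT.compl)
          intro x hx
          apply ENNReal.ofReal_le_ofReal
          apply Real.exp_le_exp.mpr
          have hx2 := hx.2
          simp only [hTdef, Set.mem_compl_iff, Set.mem_setOf_eq, not_lt, hLeq] at hx2
          exact hx2
      _ = ENNReal.ofReal (Real.exp ε)
            * (Measure.pi fun i => gaussianReal (v' i) ((σ^2).toNNReal)) (S ∩ Tᶜ) :=
          setLIntegral_const _ _
      _ ≤ ENNReal.ofReal (Real.exp ε) * ν S := by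
          apply mul_le_mul_right
          exact measure_mono Set.inter_subset_left
  -- core bound, packaged
  have core : ∀ (E : Set (Fin p → ℝ)), MeasurableSet E → ∀ (θ t K : ℝ),
      (1 + 2*t) * m = θ → (∀ x ∈ E, -t * L x + (t + t^2) * m ≤ K) →
      (E ⊆ {x | θ < L x}) → μ E ≤ 2⁻¹ * ENNReal.ofReal (Real.exp K) := by
    intro E hE θ t K h1 h2 h3
    rw [hμdef]
    refine gauss_core_bound p v v' hs2 E hE θ t K ?_ ?_ ?_
    · rw [← hmeq]; exact h1
    · intro x hx
      rw [← hmeq]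
      have h4 := h2 x hx
      simp only [hLeq] at h4
      exact h4
    · intro x hx
      have h4 := h3 hx
      simp only [hLeq, Set.mem_setOf_eq] at h4 ⊢
      exact h4
  -- Tail
  have tail : μ T ≤ ENNReal.ofReal δ := by
    by_cases hD0 : (∑ i, (v i - v' i)^2) = 0
    · have hvv' : ∀ i, v i = v' i := by
        intro i
        have h := (Finset.sum_eq_zero_iff_of_nonneg
          (fun i _ => sq_nonneg (v i - v' i))).mp hD0 i (Finset.mem_univ i)
        nlinarith [h]
      have hTempty : T = ∅ := by
        ext x
        simp only [hTdef, Set.mem_setOf_eq, Set.mem_empty_iff_false, iff_false, not_lt, hLeq]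
        have hz : ∀ i : Fin p, ((x i - v' i)^2 - (x i - v i)^2)/(2*σ^2) = 0 := by
          intro i; rw [hvv' i]; ring
        rw [Finset.sum_congr rfl fun i _ => hz i]
        simp only [Finset.sum_const_zero]
        linarith
      rw [hTempty]
      simp
    · -- nondegenerate case
      have hDsq0 : 0 < (∑ i, (v i - v' i)^2) :=
        lt_of_le_of_ne (Finset.sum_nonneg fun i _ => sq_nonneg _) (Ne.symm hD0)
      have hDsqΔ : (∑ i, (v i - v' i)^2) ≤ Δ^2 := by
        have h1 : Real.sqrt (∑ i, (v i - v' i)^2) ^ 2 ≤ Δ^2 :=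
          pow_le_pow_left₀ (Real.sqrt_nonneg _) hsens 2
        rwa [Real.sq_sqrt (le_of_lt hDsq0)] at h1
      have hm : 0 < m := by rw [hmeq]; positivity
      have hσ2 : σ^2 = c^2*Δ^2/ε^2 := by rw [hσ]; field_simp
      have hc2m : 2*c^2*m ≤ ε^2 := by
        have hmval : 2*c^2*m = (∑ i, (v i - v' i)^2)*ε^2/Δ^2 := by
          rw [hmeq, hσ2]
          field_simp
        rw [hmval, div_le_iff₀ (by positivity)]
        nlinarith
      have hδlb : 1.25 * Real.exp (-(c^2)/2) < δ := by
        have h125 : (0:ℝ) < 1.25/δ := by positivity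
        have h2 : (1.25:ℝ)/δ < Real.exp (c^2/2) := by
          calc (1.25:ℝ)/δ = Real.exp (Real.log (1.25/δ)) := (Real.exp_log h125).symm
            _ < Real.exp (c^2/2) := by apply Real.exp_lt_exp.mpr; linarith
        have h3 := Real.exp_pos (c^2/2)
        have h4 : Real.exp (-(c^2)/2) = (Real.exp (c^2/2))⁻¹ := by
          rw [← Real.exp_neg]; ring_nf
        rw [h4]
        rw [div_lt_iff₀ hδ0] at h2
        have h5 := mul_inv_cancel₀ (ne_of_gt h3)
        nlinarith
      rcases le_or_gt m ε with hmε | hmε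
      · -- regime (i): m ≤ ε
        have hmean : (1 + 2*((ε - m)/(2*m))) * m = ε := by field_simp; ring
        set t := (ε - m)/(2*m) with htdef
        have ht : 0 ≤ t := div_nonneg (by linarith) (by linarith)
        have hKb := core T hT ε t (-t*ε + (t + t^2)*m) hmean
          (by
            intro x hx
            simp only [hTdef, Set.mem_setOf_eq] at hx
            nlinarith)
          (by rw [hTdef])
        refine le_trans hKb (half_ofReal_le ?_)
        -- exp K ≤ 2δ
        have hKval : -t*ε + (t + t^2)*m = -((ε - m)^2/(4*m)) := by
          rw [htdef]; field_simp; ring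
        rw [hKval]
        have hstep1 : Real.exp (-((ε - m)^2/(4*m))) ≤ 2.5 * Real.exp (-(ε^2/(4*m))) := by
          have hsplit : Real.exp (-((ε - m)^2/(4*m)))
              = Real.exp (-((ε - m)^2/(4*m)) + ε^2/(4*m)) * Real.exp (-(ε^2/(4*m))) := by
            rw [← Real.exp_add]; ring_nf
          rw [hsplit]
          have harg : -((ε - m)^2/(4*m)) + ε^2/(4*m) = (2*ε - m)/4 := by
            field_simp; ring
          have h1 : Real.exp (-((ε - m)^2/(4*m)) + ε^2/(4*m)) ≤ 2.5 := by
            rw [harg]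
            calc Real.exp ((2*ε - m)/4) ≤ Real.exp (1/2 : ℝ) := by
                  apply Real.exp_le_exp.mpr; nlinarith
              _ ≤ 2.5 := exp_half_le
          have h2 := Real.exp_pos (-(ε^2/(4*m)))
          nlinarith
        have hstep2 : Real.exp (-(ε^2/(4*m))) ≤ Real.exp (-(c^2)/2) := by
          apply Real.exp_le_exp.mpr
          rw [neg_div]
          apply neg_le_neg
          rw [div_le_div_iff₀ (by norm_num) (by positivity)]
          nlinarith
        nlinarith [Real.exp_pos (-(ε^2/(4*m)))]
      · -- regime (ii): ε < m
        have h2c2ε : 2*c^2 < ε := by nlinarith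
        have hc244 : (0.44:ℝ) < c^2 := by
          have hlogδ : Real.log δ < 0 := Real.log_neg hδ0 hδ1
          have hld : Real.log (1.25/δ) = Real.log 1.25 - Real.log δ :=
            Real.log_div (by norm_num) (ne_of_gt hδ0)
          have := log_125_lb
          nlinarith
        have hε88 : 0.88 < ε := by nlinarith
        have hm88 : 0.88 < m := lt_trans hε88 hmε
        have hmub : m ≤ 25/22 := by nlinarith
        have haub : m - ε ≤ 3/22 := by nlinarith [mul_nonneg (sub_nonneg.2 hε1.le) (sub_nonneg.2 hε88.le)]
        -- two pieces
        have hmean1 : (1 + 2*((ε - m)/(2*m))) * m = ε := by field_simp; ring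
        have hmean2 : (1 + 2*((3:ℝ)/(2*m))) * m = m + 3 := by field_simp
        set t1 := (ε - m)/(2*m) with ht1def
        set t2 := (3:ℝ)/(2*m) with ht2def
        have ht1 : t1 ≤ 0 := div_nonpos_of_nonpos_of_nonneg (by linarith) (by linarith)
        have ht2 : 0 ≤ t2 := by positivity
        have hE1 : MeasurableSet {x | ε < L x ∧ L x ≤ m + 3} :=
          (measurableSet_lt measurable_const hLm).inter (measurableSet_le hLm measurable_const)
        have hE2 : MeasurableSet {x | m + 3 < L x} := measurableSet_lt measurable_const hLm
        have hb1 := core _ hE1 ε t1 (-t1*(m+3) + (t1 + t1^2)*m) hmean1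
          (by
            intro x hx
            have hx2 := hx.2
            nlinarith)
          (fun x hx => hx.1)
        have hb2 := core _ hE2 (m+3) t2 (-t2*(m+3) + (t2 + t2^2)*m) hmean2
          (by
            intro x hx
            simp only [Set.mem_setOf_eq] at hx
            nlinarith)
          (fun x hx => hx)
        have hsplitT : μ T ≤ μ {x | ε < L x ∧ L x ≤ m + 3} + μ {x | m + 3 < L x} := by
          refine le_trans (measure_mono ?_) (measure_union_le _ _)
          intro x hx
          simp only [hTdef, Set.mem_setOf_eq, Set.mem_union] at hx ⊢
          rcases le_or_gt (L x) (m+3) with h | h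
          · exact Or.inl ⟨hx, h⟩
          · exact Or.inr h
        refine le_trans hsplitT (le_trans (add_le_add hb1 hb2) ?_)
        rw [← mul_add, ← ENNReal.ofReal_add (le_of_lt (Real.exp_pos _)) (le_of_lt (Real.exp_pos _))]
        apply half_ofReal_le
        -- numerics : exp K1 + exp K2 ≤ 2 δ
        have hK1val : -t1*(m+3) + (t1 + t1^2)*m = (6*(m-ε) + (m-ε)^2)/(4*m) := by
          rw [ht1def]; field_simp; ring
        have hK2val : -t2*(m+3) + (t2 + t2^2)*m = -(9/(4*m)) := by
          rw [ht2def]; field_simp; ring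
        rw [hK1val, hK2val]
        have hK1ub : (6*(m-ε) + (m-ε)^2)/(4*m) ≤ 0.3 := by
          rw [div_le_iff₀ (by positivity)]
          nlinarith
        have he1 : Real.exp ((6*(m-ε) + (m-ε)^2)/(4*m)) ≤ 10/7 := by
          calc Real.exp ((6*(m-ε) + (m-ε)^2)/(4*m)) ≤ Real.exp 0.3 := Real.exp_le_exp.mpr hK1ub
            _ ≤ 1/(1-0.3) := exp_le_inv_one_sub (by norm_num)
            _ ≤ 10/7 := by norm_num
        have he2 : Real.exp (-(9/(4*m))) ≤ 1/2.98 := by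
          calc Real.exp (-(9/(4*m))) ≤ Real.exp (-(1.98:ℝ)) := by
                apply Real.exp_le_exp.mpr
                apply neg_le_neg
                rw [le_div_iff₀ (by positivity)]
                nlinarith
            _ ≤ 1/(1+1.98) := exp_neg_le_inv_one_add (by norm_num)
            _ ≤ 1/2.98 := by norm_num
        have hδlb2 : 0.9375 < δ := by
          have hc2half : c^2 < 1/2 := by nlinarith
          have hexplb : (0.75:ℝ) ≤ Real.exp (-(c^2)/2) := by
            calc (0.75:ℝ) = 1 + (-(1/4)) := by norm_num
              _ ≤ Real.exp (-(1/4)) := by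
                  have := Real.add_one_le_exp (-(1/4) : ℝ)
                  linarith
              _ ≤ Real.exp (-(c^2)/2) := by
                  apply Real.exp_le_exp.mpr
                  nlinarith
          nlinarith
        nlinarith
  calc μ S = μ ((S ∩ T) ∪ (S ∩ Tᶜ)) := by rw [Set.inter_union_compl]
    _ ≤ μ (S ∩ T) + μ (S ∩ Tᶜ) := measure_union_le _ _
    _ ≤ ENNReal.ofReal (Real.exp ε) * ν S + ENNReal.ofReal δ := by
        rw [add_comm]
        exact add_le_add part1 ((measure_mono Set.inter_subset_right).trans tail)
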